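/- arXiv:1507.01091 — 2 statements merged into one kernel-verified Lean document; each statement's English description precedes it below -/
import Mathlib

section
/- Let q = y² + a·y + b ∈ K[x][y] with a, b ∈ K[x], and assume that deg_x(a² − 4b) is odd. Then for any p ∈ K[x][y], the resultant Res_y(p, q) lies in K if and only if p = α·q + β for some α ∈ K[x][y] and β ∈ K. -/
open Polynomial

noncomputable section

namespace DiscPaper

variable {K : Type*} [Field K]

/-- The partial degree in `x` of a bivariate polynomial `f ∈ K[x][y]`
(inner variable `x`, outer variable `y`). -/
def degX (f : Polynomial (Polynomial K)) : ℕ :=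
  f.support.sup fun j => (f.coeff j).natDegree

/-- The Sylvester matrix of `f` (regarded as having degree `m`) and `g` (regarded as having
degree `n`): `n` rows of shifted coefficients of `f` and `m` rows of shifted coefficients
of `g`. -/
def sylvesterAux {R : Type*} [CommRing R] (m n : ℕ) (f g : Polynomial R) :
    Matrix (Fin (n + m)) (Fin (n + m)) R :=
  Matrix.of fun i j =>
    if (i : ℕ) < n then
      (if (i : ℕ) ≤ (j : ℕ) ∧ (j : ℕ) ≤ (i : ℕ) + m then f.coeff (m + (i : ℕ) - (j : ℕ)) else 0)
    else
      (if (i : ℕ) - n ≤ (j : ℕ) ∧ (j : ℕ) ≤ ((i : ℕ) - n) + n then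
        g.coeff (n + ((i : ℕ) - n) - (j : ℕ)) else 0)

/-- The resultant of two polynomials, as the determinant of their Sylvester matrix. -/
def resultant {R : Type*} [CommRing R] (f g : Polynomial R) : R :=
  (sylvesterAux f.natDegree g.natDegree f g).det

/-- The generic polynomial of degree `d`, with indeterminate coefficients. -/
def genPoly (d : ℕ) : Polynomial (MvPolynomial (Fin (d + 1)) ℤ) :=
  ∑ j : Fin (d + 1), Polynomial.C (MvPolynomial.X j) * Polynomial.X ^ (j : ℕ)

open scoped Classical in
/-- The universal discriminant in degree `d`: the unique polynomial `D` in the indeterminate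
coefficients `a_0, …, a_d` such that `a_d * D = (-1)^(d(d-1)/2) * Res(f, f')` for the generic
polynomial `f` of degree `d`. -/
def discUniv (d : ℕ) : MvPolynomial (Fin (d + 1)) ℤ :=
  if d = 0 then 1
  else if h : ∃ D, MvPolynomial.X (Fin.last d) * D =
      (-1) ^ (d * (d - 1) / 2) *
        (sylvesterAux d (d - 1) (genPoly d) (Polynomial.derivative (genPoly d))).det
  then h.choose else 0

/-- The discriminant of a polynomial `f ∈ R[y]`: the universal discriminant of degree
`natDegree f` evaluated at the coefficients of `f`. -/
def disc {R : Type*} [CommRing R] (f : Polynomial R) : R :=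
  MvPolynomial.aeval (fun j : Fin (f.natDegree + 1) => f.coeff (j : ℕ)) (discUniv f.natDegree)

/-- Substitution of `p` for `x` and `q` for `y` in the bivariate polynomial `f ∈ K[x][y]`;
i.e. `f(p, q)`. -/
def subst2 (p q f : Polynomial (Polynomial K)) : Polynomial (Polynomial K) :=
  Polynomial.eval₂ (Polynomial.aeval p).toRingHom q f

/-- The bivariate polynomial `f(y, x)` obtained from `f(x, y)` by exchanging the variables. -/
def swapXY (f : Polynomial (Polynomial K)) : Polynomial (Polynomial K) :=
  subst2 Polynomial.X (Polynomial.C Polynomial.X) f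

/-- `f ∈ K[x][y]` is monic with respect to `y` if its leading coefficient with respect to `y`
is a nonzero constant, i.e. a unit of `K[x]`. -/
def MonicY (f : Polynomial (Polynomial K)) : Prop :=
  IsUnit f.leadingCoeff

/-- `f ∈ K[x][y]` is primitive with respect to `y` if it has no nonconstant factor in `K[x]`. -/
def PrimitiveY (f : Polynomial (Polynomial K)) : Prop :=
  ∀ u : Polynomial K, Polynomial.C u ∣ f → IsUnit u

/-- `f ∈ K[x][y]` is minimal: primitive, irreducible, of `y`-degree at least one, and with
`deg_x Δ_y(f) = d_y - 1`. -/
def Minimal (f : Polynomial (Polynomial K)) : Prop :=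
  PrimitiveY f ∧ Irreducible f ∧ 1 ≤ f.natDegree ∧ (disc f).natDegree = f.natDegree - 1

/-- The coefficient of `x^(degX f)` in `f`, as a polynomial in `y`: the leading coefficient
of `f` with respect to `x`. -/
def leadX (f : Polynomial (Polynomial K)) : Polynomial K :=
  ∑ j ∈ f.support, Polynomial.C ((f.coeff j).coeff (degX f)) * Polynomial.X ^ j

/-- The homogenisation in degree `n` with respect to `y` of `f ∈ K[x][y]`, as a binary form
in `Y₀, Y₁` (the variables `0` and `1` of an `MvPolynomial (Fin 2)`) over `K[x]`. -/
def homY (n : ℕ) (f : Polynomial (Polynomial K)) : MvPolynomial (Fin 2) (Polynomial K) :=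
  ∑ j ∈ Finset.range (n + 1),
    MvPolynomial.C (f.coeff j) * MvPolynomial.X 0 ^ j * MvPolynomial.X 1 ^ (n - j)

/-- The action of a matrix `((a,b),(c,d))` over `K[x]` on binary forms:
`F(Y₀, Y₁) ↦ F(a Y₀ + b Y₁, c Y₀ + d Y₁)`. -/
def gAct (a b c d : Polynomial K) (F : MvPolynomial (Fin 2) (Polynomial K)) :
    MvPolynomial (Fin 2) (Polynomial K) :=
  MvPolynomial.aeval
    ![MvPolynomial.C a * MvPolynomial.X 0 + MvPolynomial.C b * MvPolynomial.X 1,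
      MvPolynomial.C c * MvPolynomial.X 0 + MvPolynomial.C d * MvPolynomial.X 1] F

/-- Two binary forms over `K[x]` are `G`-equivalent, for `G = GL₂(K[x])`, if `F = σ(H)` for
some `σ ∈ G`. -/
def GEquivF (F H : MvPolynomial (Fin 2) (Polynomial K)) : Prop :=
  ∃ a b c d : Polynomial K, IsUnit (a * d - b * c) ∧ F = gAct a b c d H

/-- Two polynomials of `K[x][y]` are `G`-equivalent if their homogenisations with respect to
`y` are `G`-equivalent. -/
def GEquiv (f g : Polynomial (Polynomial K)) : Prop :=
  GEquivF (homY f.natDegree f) (homY g.natDegree g)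

/-- The parameter `a(f)`: the degree in `x` of the coefficient of `y^0` in `f`. -/
def aPar (f : Polynomial (Polynomial K)) : ℕ := (f.coeff 0).natDegree

/-- The parameter `b(f)`: the degree in `x` of the coefficient of `y^(d_y)` in `f`. -/
def bPar (f : Polynomial (Polynomial K)) : ℕ := (f.coeff f.natDegree).natDegree

/-- The parameter `c(f) = min (a(f), b(f))`. -/
def cPar (f : Polynomial (Polynomial K)) : ℕ := min (aPar f) (bPar f)

/-- The generic Newton polytope of `f`: the convex hull of `(0,0)`, `(0, d_y)` and the
support of `f` (a point `(i, j)` for each monomial `x^i y^j` of `f`). -/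
def NPolytope (f : Polynomial (Polynomial K)) : Set (ℝ × ℝ) :=
  convexHull ℝ ({((0 : ℝ), (0 : ℝ)), ((0 : ℝ), (f.natDegree : ℝ))} ∪
    {p : ℝ × ℝ | ∃ i j : ℕ, (f.coeff j).coeff i ≠ 0 ∧ p = ((i : ℝ), (j : ℝ))})

/-- The euclidean area of the generic Newton polytope of `f`. -/
def nvol (f : Polynomial (Polynomial K)) : ℝ :=
  (MeasureTheory.volume (NPolytope f)).toReal

/-- The discriminant of a binary form of degree `d` over `R`: the universal discriminant of
degree `d` evaluated at the coefficients of the form, where the `j`-th coefficient is the one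
of the monomial `Y₀^j Y₁^(d-j)`. -/
def formDisc {R : Type*} [CommRing R] (d : ℕ) (F : MvPolynomial (Fin 2) R) : R :=
  MvPolynomial.aeval
    (fun j : Fin (d + 1) =>
      MvPolynomial.coeff (Finsupp.single (0 : Fin 2) (j : ℕ) + Finsupp.single (1 : Fin 2) (d - (j : ℕ))) F)
    (discUniv d)

section AuxResQuad

variable {R : Type*} [CommRing R]

lemma qcoeff (a b : R) (t : ℕ) :
    (X ^ 2 + C a * X + C b).coeff t =
      if t = 0 then b else if t = 1 then a else if t = 2 then 1 else 0 := by
  rcases t with _|_|_|t <;>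
    simp [coeff_add, coeff_X_pow, coeff_C, coeff_C_mul]

lemma qmonic (a b : R) [Nontrivial R] : (X ^ 2 + C a * X + C b).Monic := by
  have h : (C a * X + C b).degree ≤ 1 := by
    apply le_trans (degree_add_le _ _)
    apply max_le
    · exact le_trans (degree_mul_le _ _) (by simpa using add_le_add degree_C_le (le_refl (degree (X:R[X]))))
    · exact le_trans degree_C_le (by norm_num)
  have := monic_X_pow_add (n := 2) (lt_of_le_of_lt h (by norm_num))
  simpa [add_assoc] using this

lemma qnatdeg (a b : R) [Nontrivial R] : (X ^ 2 + C a * X + C b).natDegree = 2 := by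
  have := natDegree_quadratic (a := (1:R)) (b := a) (c := b) one_ne_zero
  simpa using this

lemma qdeg (a b : R) [Nontrivial R] : (X ^ 2 + C a * X + C b).degree = 2 := by
  rw [degree_eq_natDegree (qmonic a b).ne_zero, qnatdeg]
  rfl

lemma modlt (a b : R) [Nontrivial R] (r : R[X]) (hr : r.natDegree ≤ 1) :
    r %ₘ (X ^ 2 + C a * X + C b) = r := by
  rw [modByMonic_eq_self_iff (qmonic a b), qdeg]
  calc r.degree ≤ (1 : ℕ) := natDegree_le_iff_degree_le.mp hr
    _ < 2 := by decide

lemma detA (a b : R) (m : ℕ) (p : R[X]) (hp : p.coeff (m + 1) = 0) :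
    (sylvesterAux (m + 1) 2 p (X ^ 2 + C a * X + C b)).det
      = (sylvesterAux m 2 p (X ^ 2 + C a * X + C b)).det := by
  set q : R[X] := X ^ 2 + C a * X + C b with hqdef
  have h := Matrix.det_succ_column_zero (sylvesterAux (m + 1) 2 p q)
  refine h.trans ?_
  have hv0 : ((0 : Fin (Nat.add 2 m).succ) : ℕ) = 0 := by simp
  rw [Finset.sum_eq_single (⟨2, by show 2 < 2 + m + 1; omega⟩ : Fin (Nat.add 2 m).succ)]
  · have h20 : sylvesterAux (m + 1) 2 p q (⟨2, by show 2 < 2 + m + 1; omega⟩ : Fin (Nat.add 2 m).succ) (0 : Fin (Nat.add 2 m).succ) = 1 := by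
      simp only [sylvesterAux, Matrix.of_apply]
      rw [hqdef]
      simp [qcoeff]
    rw [h20]
    have hsub : (sylvesterAux (m + 1) 2 p q).submatrix
          (⟨2, by show 2 < 2 + m + 1; omega⟩ : Fin (Nat.add 2 m).succ).succAbove Fin.succ
        = sylvesterAux m 2 p q := by
      ext i j
      rcases i with ⟨i, hi⟩
      rcases j with ⟨j, hj⟩
      simp only [Matrix.submatrix_apply, Fin.succAbove, Fin.castSucc, Fin.castAdd, Fin.castLE,
        Fin.lt_def, Fin.succ, sylvesterAux, Matrix.of_apply, Fin.val_mk]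
      split_ifs <;> (try simp only [Fin.val_mk] at *) <;>
        first
          | rfl
          | omega
          | (exfalso; omega)
          | (congr 1; omega)
          | (convert hp using 2; omega)
    rw [hsub]
    simp
  · intro i _ hne
    rcases i with ⟨i, hi⟩
    have hine : i ≠ 2 := by simpa [Fin.ext_iff] using hne
    have hz : sylvesterAux (m + 1) 2 p q ⟨i, hi⟩ (0 : Fin (Nat.add 2 m).succ) = 0 := by
      rcases Nat.lt_or_ge i 2 with h2 | h2
      · interval_cases i
        · simpa [sylvesterAux, Fin.ext_iff] using hp
        · simp [sylvesterAux, Fin.ext_iff]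
      · simp [sylvesterAux, show ¬ (i < 2) by omega, Nat.sub_eq_zero_iff_le,
          show ¬ (i ≤ 2) by omega]
        exact fun h1 => absurd h1 (by omega)
    rw [hz]
    ring
  · intro hmem
    exact absurd (Finset.mem_univ _) hmem

lemma detB (a b : R) (m : ℕ) (hm : 2 ≤ m) (p : R[X]) :
    (sylvesterAux m 2 (p - C (p.coeff m) * ((X ^ 2 + C a * X + C b) * X ^ (m - 2)))
        (X ^ 2 + C a * X + C b)).det
      = (sylvesterAux m 2 p (X ^ 2 + C a * X + C b)).det := by
  have hsz : ∀ t : ℕ, t < 4 → t < 2 + m := by omega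
  set q : R[X] := X ^ 2 + C a * X + C b with hqdef
  set c : R := p.coeff m with hcdef
  set M := sylvesterAux m 2 p q with hM
  set i0 : Fin (2 + m) := ⟨0, hsz 0 (by omega)⟩
  set i1 : Fin (2 + m) := ⟨1, hsz 1 (by omega)⟩
  set i2 : Fin (2 + m) := ⟨2, hsz 2 (by omega)⟩
  set i3 : Fin (2 + m) := ⟨3, hsz 3 (by omega)⟩
  set M1 := M.updateRow i0 (M i0 + (-c) • M i2) with hM1
  set M2 := M1.updateRow i1 (M1 i1 + (-c) • M1 i3) with hM2
  have hd1 : M1.det = M.det := Matrix.det_updateRow_add_smul_self M (by simp [i0, i2, Fin.ext_iff]) _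
  have hd2 : M2.det = M1.det := Matrix.det_updateRow_add_smul_self M1 (by simp [i1, i3, Fin.ext_iff]) _
  have hrow1 : M1 i1 = M i1 := Matrix.updateRow_ne (by simp [i0, i1, Fin.ext_iff])
  have hrow3 : M1 i3 = M i3 := Matrix.updateRow_ne (by simp [i0, i3, Fin.ext_iff])
  have key : sylvesterAux m 2 (p - C c * (q * X ^ (m - 2))) q = M2 := by
    ext i j
    rcases i with ⟨i, hi⟩
    rcases j with ⟨j, hj⟩
    rw [hM2, Matrix.updateRow_apply]
    by_cases hieq1 : (⟨i, hi⟩ : Fin (2 + m)) = i1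
    · rw [if_pos hieq1, hrow1, hrow3]
      have : i = 1 := by simpa [i1, Fin.ext_iff] using hieq1
      subst this
      simp only [hM, sylvesterAux, Matrix.of_apply, Pi.add_apply, Pi.smul_apply, smul_eq_mul,
        Fin.val_mk, i1, i3, coeff_sub, coeff_C_mul, coeff_mul_X_pow']
      split_ifs <;>
        first
          | ring1
          | omega
          | (exfalso; omega)
          | (rw [sub_eq_add_neg, ← neg_mul]; congr 3 <;> omega)
    · rw [if_neg hieq1, hM1, Matrix.updateRow_apply]
      by_cases hieq0 : (⟨i, hi⟩ : Fin (2 + m)) = i0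
      · rw [if_pos hieq0]
        have : i = 0 := by simpa [i0, Fin.ext_iff] using hieq0
        subst this
        simp only [hM, sylvesterAux, Matrix.of_apply, Pi.add_apply, Pi.smul_apply, smul_eq_mul,
          Fin.val_mk, i0, i2, coeff_sub, coeff_C_mul, coeff_mul_X_pow']
        split_ifs <;>
          first
            | ring1
            | omega
            | (exfalso; omega)
            | (rw [sub_eq_add_neg, ← neg_mul]; congr 3 <;> omega)
      · rw [if_neg hieq0]
        have h2i : 2 ≤ i := by
          by_contra hlt
          interval_cases i
          · exact hieq0 (by simp [i0, Fin.ext_iff])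
          · exact hieq1 (by simp [i1, Fin.ext_iff])
        simp only [hM, sylvesterAux, Matrix.of_apply, Fin.val_mk,
          coeff_sub, coeff_C_mul, coeff_mul_X_pow',
          show ¬ (i < 2) by omega, if_false]
  rw [key, hd2, hd1]

lemma detKey (a b : R) [Nontrivial R] : ∀ (m : ℕ) (p : R[X]), p.natDegree ≤ m →
    (sylvesterAux m 2 p (X ^ 2 + C a * X + C b)).det =
      (p %ₘ (X ^ 2 + C a * X + C b)).coeff 0 ^ 2
        - a * ((p %ₘ (X ^ 2 + C a * X + C b)).coeff 0
            * (p %ₘ (X ^ 2 + C a * X + C b)).coeff 1)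
        + b * (p %ₘ (X ^ 2 + C a * X + C b)).coeff 1 ^ 2 := by
  intro m
  induction m using Nat.strong_induction_on with
  | _ m ih =>
    match m with
    | 0 =>
      intro p hp
      rw [modlt a b p (le_trans hp (by omega))]
      have h1 : p.coeff 1 = 0 := coeff_eq_zero_of_natDegree_lt (by omega)
      rw [Matrix.det_fin_two]
      simp [sylvesterAux, h1]
      ring
    | 1 =>
      intro p hp
      rw [modlt a b p hp]
      rw [Matrix.det_fin_three]
      simp only [sylvesterAux, Matrix.of_apply]
      norm_num [qcoeff]
      ring
    | (m + 2) =>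
      intro p hp
      have hcoeff : ∀ t : ℕ, m + 1 < t →
          (p - C (p.coeff (m + 2)) * ((X ^ 2 + C a * X + C b) * X ^ (m + 2 - 2))).coeff t = 0 := by
        intro t ht
        rw [coeff_sub, coeff_C_mul, coeff_mul_X_pow']
        rcases Nat.lt_or_ge (m + 2) t with h | h
        · rw [coeff_eq_zero_of_natDegree_lt (lt_of_le_of_lt hp h)]
          rw [if_pos (by omega), qcoeff, if_neg (by omega), if_neg (by omega), if_neg (by omega)]
          ring
        · have : t = m + 2 := by omega
          subst this
          rw [if_pos (by omega), qcoeff, if_neg (by omega), if_neg (by omega), if_pos (by omega)]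
          ring
      have hdeg' : (p - C (p.coeff (m + 2)) * ((X ^ 2 + C a * X + C b) * X ^ (m + 2 - 2))).natDegree ≤ m + 1 :=
        natDegree_le_iff_coeff_eq_zero.mpr hcoeff
      have hmod : (p - C (p.coeff (m + 2)) * ((X ^ 2 + C a * X + C b) * X ^ (m + 2 - 2)))
            %ₘ (X ^ 2 + C a * X + C b) = p %ₘ (X ^ 2 + C a * X + C b) := by
        rw [sub_modByMonic]
        have hz : (C (p.coeff (m + 2)) * ((X ^ 2 + C a * X + C b) * X ^ (m + 2 - 2)))
            %ₘ (X ^ 2 + C a * X + C b) = 0 := by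
          rw [modByMonic_eq_zero_iff_dvd (qmonic a b)]
          exact ⟨C (p.coeff (m + 2)) * X ^ (m + 2 - 2), by ring⟩
        rw [hz, sub_zero]
      calc (sylvesterAux (m + 2) 2 p (X ^ 2 + C a * X + C b)).det
          = (sylvesterAux (m + 2) 2
              (p - C (p.coeff (m + 2)) * ((X ^ 2 + C a * X + C b) * X ^ (m + 2 - 2)))
              (X ^ 2 + C a * X + C b)).det := (detB a b (m + 2) (by omega) p).symm
        _ = (sylvesterAux (m + 1) 2
              (p - C (p.coeff (m + 2)) * ((X ^ 2 + C a * X + C b) * X ^ (m + 2 - 2)))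
              (X ^ 2 + C a * X + C b)).det :=
            detA a b (m + 1) _ (hcoeff (m + 2) (by omega))
        _ = _ := ih (m + 1) (by omega) _ hdeg'
        _ = _ := by rw [hmod]

end AuxResQuad

/-- For `q = y² + a y + b` with `deg_x (a² - 4b)` odd, `Res_y(p, q)` is a
constant iff `p = α q + β` with `β ∈ K`. -/
theorem resultant_with_quadratic [IsAlgClosed K] [CharZero K]
    (a b : Polynomial K) (q : Polynomial (Polynomial K))
    (hq : q = Polynomial.X ^ 2 + Polynomial.C a * Polynomial.X + Polynomial.C b)
    (hodd : Odd (a ^ 2 - 4 * b).natDegree)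
    (p : Polynomial (Polynomial K)) :
    (∃ k : K, resultant p q = Polynomial.C k) ↔
      ∃ (α : Polynomial (Polynomial K)) (β : K),
        p = α * q + Polynomial.C (Polynomial.C β) := by
  subst hq
  set q : Polynomial (Polynomial K) := X ^ 2 + C a * X + C b with hqdef
  have hres : resultant p q =
      (p %ₘ q).coeff 0 ^ 2 - a * ((p %ₘ q).coeff 0 * (p %ₘ q).coeff 1)
        + b * (p %ₘ q).coeff 1 ^ 2 := by
    have h2 : q.natDegree = 2 := qnatdeg a b
    unfold resultant
    rw [h2]
    exact detKey a b p.natDegree p le_rfl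
  constructor
  · rintro ⟨k, hk⟩
    rw [hres] at hk
    set c : Polynomial K := (p %ₘ q).coeff 0 with hc
    set d : Polynomial K := (p %ₘ q).coeff 1 with hd
    -- first show d = 0
    have hd0 : d = 0 := by
      by_contra hdne
      have hv : a ^ 2 - 4 * b ≠ 0 := by
        intro h0
        rw [h0] at hodd
        simp [Nat.odd_iff] at hodd
      have key2 : (a ^ 2 - 4 * b) * d ^ 2 = (2 * c - a * d) ^ 2 - C (4 * k) := by
        have h4 : (C (4 * k) : Polynomial K) = 4 * C k := by
          rw [C_mul, map_ofNat]
        rw [h4, ← hk]; ring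
      have hoddL : Odd ((a ^ 2 - 4 * b) * d ^ 2).natDegree := by
        rw [natDegree_mul hv (pow_ne_zero 2 hdne), natDegree_pow]
        rcases hodd with ⟨t, ht⟩
        exact ⟨t + d.natDegree, by omega⟩
      rw [key2] at hoddL
      set u : Polynomial K := 2 * c - a * d with hu
      rcases Nat.eq_zero_or_pos u.natDegree with h0 | hpos
      · have hle : (u ^ 2 - C (4 * k)).natDegree = 0 := by
          have := natDegree_sub_le (u ^ 2) (C (4 * k))
          rw [natDegree_pow, h0, natDegree_C] at this
          omega
        rw [hle] at hoddL
        simp [Nat.odd_iff] at hoddL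
      · have heq : (u ^ 2 - C (4 * k)).natDegree = 2 * u.natDegree := by
          rw [natDegree_sub_eq_left_of_natDegree_lt, natDegree_pow]
          rw [natDegree_pow, natDegree_C]
          omega
        rw [heq] at hoddL
        rcases hoddL with ⟨t, ht⟩
        omega
    -- now c ^ 2 = C k
    have hc2 : c ^ 2 = C k := by
      rw [← hk, hd0]; ring
    have hcn : c.natDegree = 0 := by
      have h1 : 2 * c.natDegree = 0 := by
        rw [← natDegree_pow, hc2, natDegree_C]
      omega
    -- r is a constant
    have hrn : (p %ₘ q).natDegree ≤ 0 := by
      apply natDegree_le_iff_coeff_eq_zero.mpr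
      intro t ht
      rcases Nat.lt_or_ge t 2 with h2 | h2
      · have : t = 1 := by omega
        rw [this]
        exact hd0
      · apply coeff_eq_zero_of_degree_lt
        have := degree_modByMonic_lt p (qmonic a b)
        rw [qdeg a b] at this
        calc (p %ₘ q).degree < 2 := this
          _ ≤ (t : WithBot ℕ) := by exact_mod_cast Nat.cast_le.mpr h2
    have hrc : p %ₘ q = C c := eq_C_of_natDegree_le_zero hrn
    refine ⟨p /ₘ q, c.coeff 0, ?_⟩
    have hcc : c = C (c.coeff 0) := eq_C_of_natDegree_eq_zero hcn
    have hdiv := modByMonic_add_div p q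
    rw [← hcc]
    conv_lhs => rw [← hdiv, hrc]
    ring
  · rintro ⟨α, β, hp⟩
    refine ⟨β ^ 2, ?_⟩
    have hmod : p %ₘ q = C (C β) := by
      rw [hp, add_modByMonic]
      have h1 : (α * q) %ₘ q = 0 := (modByMonic_eq_zero_iff_dvd (qmonic a b)).mpr ⟨α, mul_comm _ _⟩
      have h2 : (C (C β) : Polynomial (Polynomial K)) %ₘ q = C (C β) :=
        modlt a b _ (by simp)
      rw [h1, h2, zero_add]
    rw [hres, hmod]
    simp [coeff_C]

end DiscPaper
end
end

section
/- Let σ = (σ_x, σ_y) ∈ Aut(A²) be a polynomial automorphism with inverse σ⁻¹ = (σ_x⁻¹, σ_y⁻¹). Then deg_y σ_x = deg_y σ_x⁻¹, deg_x σ_y = deg_x σ_y⁻¹, deg_x σ_x = deg_y σ_y⁻¹, and deg_y σ_y = deg_x σ_x⁻¹. Moreover: if deg_y σ_x = 0 then σ_x = ax + b for some a ∈ K*, b ∈ K, and otherwise the leading coefficient of σ_x with respect to y is a nonzero constant of K; if deg_x σ_y = 0 then σ_y = ay + b (a ∈ K*, b ∈ K), otherwise the leading coefficient of σ_y with respect to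 x is a nonzero constant; if deg_x σ_x = 0 then σ_x = ay + b (a ∈ K*, b ∈ K), otherwise the leading coefficient of σ_x with respect to x is a nonzero constant; if deg_y σ_y = 0 then σ_y = ax + b (a ∈ K*, b ∈ K), otherwise the leading coefficient of σ_y with respect to y is a nonzero constant. -/
open Polynomial

noncomputable section

namespace DiscPaper

variable {K : Type*} [Field K]

/-- `subst2` as an algebra hom. -/
def substAlg (p q : Polynomial (Polynomial K)) :
    Polynomial (Polynomial K) →ₐ[K] Polynomial (Polynomial K) :=
  Polynomial.aevalTower (Polynomial.aeval p) q

lemma substAlg_apply (p q f : Polynomial (Polynomial K)) :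
    substAlg p q f = subst2 p q f := rfl

lemma subst2_C (p q : Polynomial (Polynomial K)) (r : Polynomial K) :
    subst2 p q (Polynomial.C r) = Polynomial.aeval p r := eval₂_C _ _

lemma subst2_X (p q : Polynomial (Polynomial K)) : subst2 p q Polynomial.X = q := eval₂_X _ _

lemma subst2_CX (p q : Polynomial (Polynomial K)) :
    subst2 p q (Polynomial.C Polynomial.X) = p := by
  rw [subst2_C]; simp

lemma subst2_CC (p q : Polynomial (Polynomial K)) (a : K) :
    subst2 p q (Polynomial.C (Polynomial.C a)) = Polynomial.C (Polynomial.C a) := by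
  rw [subst2_C, aeval_C]; rfl

lemma subst2_aeval (p q s : Polynomial (Polynomial K)) (r : Polynomial K) :
    subst2 p q (Polynomial.aeval s r) = Polynomial.aeval (subst2 p q s) r := by
  have h : ((substAlg p q).toRingHom).comp (Polynomial.aeval s).toRingHom
      = (Polynomial.aeval (subst2 p q s) : Polynomial K →ₐ[K] _).toRingHom := by
    apply Polynomial.ringHom_ext
    · intro a
      simp only [RingHom.coe_comp, Function.comp_apply, AlgHom.toRingHom_eq_coe,
        RingHom.coe_coe, aeval_C]
      show substAlg p q (Polynomial.C (Polynomial.C a)) = _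
      rw [substAlg_apply, subst2_CC]; rfl
    · simp only [RingHom.coe_comp, Function.comp_apply, AlgHom.toRingHom_eq_coe,
        RingHom.coe_coe, aeval_X]
      rfl
  exact RingHom.congr_fun h r

lemma subst2_comp (p q s t f : Polynomial (Polynomial K)) :
    subst2 p q (subst2 s t f) = subst2 (subst2 p q s) (subst2 p q t) f := by
  have h : ((substAlg p q).toRingHom).comp (substAlg s t).toRingHom
      = (substAlg (subst2 p q s) (subst2 p q t)).toRingHom := by
    apply Polynomial.ringHom_ext
    · intro r
      show substAlg p q (substAlg s t (Polynomial.C r)) = substAlg _ _ (Polynomial.C r)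
      rw [substAlg_apply, substAlg_apply, substAlg_apply, subst2_C, subst2_C, subst2_aeval]
    · show substAlg p q (substAlg s t Polynomial.X) = substAlg _ _ Polynomial.X
      rw [substAlg_apply, substAlg_apply, substAlg_apply, subst2_X, subst2_X]
  exact RingHom.congr_fun h f

lemma subst2_id (f : Polynomial (Polynomial K)) :
    subst2 (Polynomial.C Polynomial.X) Polynomial.X f = f := by
  have h : (Polynomial.aeval (Polynomial.C Polynomial.X :
      Polynomial (Polynomial K))).toRingHom = (Polynomial.C : Polynomial K →+* _) := by
    apply Polynomial.ringHom_ext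
    · intro a; simp
    · simp
  rw [subst2, h, Polynomial.eval₂_C_X]

lemma swapXY_swapXY (f : Polynomial (Polynomial K)) : swapXY (swapXY f) = f := by
  rw [swapXY, swapXY, subst2_comp, subst2_X, subst2_CX, subst2_id]

lemma subst2_swap_left (p q h : Polynomial (Polynomial K)) :
    subst2 p q (swapXY h) = subst2 q p h := by
  rw [swapXY, subst2_comp, subst2_X, subst2_CX]

lemma swap_subst2 (p q h : Polynomial (Polynomial K)) :
    swapXY (subst2 p q h) = subst2 (swapXY p) (swapXY q) h := by
  rw [swapXY, subst2_comp]; rfl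

lemma swapXY_X : swapXY (Polynomial.X : Polynomial (Polynomial K)) = Polynomial.C Polynomial.X :=
  subst2_X _ _

lemma swapXY_CX : swapXY (Polynomial.C Polynomial.X : Polynomial (Polynomial K)) = Polynomial.X :=
  subst2_CX _ _


lemma swapXY_monomial (n i : ℕ) (a : K) :
    swapXY (monomial n (monomial i a) : Polynomial (Polynomial K))
      = monomial i (monomial n a) := by
  rw [swapXY, subst2, eval₂_monomial]
  simp only [AlgHom.toRingHom_eq_coe, RingHom.coe_coe, aeval_monomial]
  have h1 : (algebraMap K (Polynomial (Polynomial K))) a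
      = Polynomial.C (Polynomial.C a) := rfl
  rw [h1, ← Polynomial.C_pow, mul_right_comm, ← Polynomial.C_mul,
    Polynomial.C_mul_X_pow_eq_monomial, Polynomial.C_mul_X_pow_eq_monomial]

lemma coeff_swapXY (f : Polynomial (Polynomial K)) (i j : ℕ) :
    ((swapXY f).coeff i).coeff j = ((f.coeff j).coeff i) := by
  induction f using Polynomial.induction_on' with
  | add p q hp hq =>
    have : swapXY (p + q) = swapXY p + swapXY q := by
      simp [swapXY, subst2, eval₂_add]
    simp [this, hp, hq]
  | monomial n r =>
    induction r using Polynomial.induction_on' with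
    | add r s hr hs =>
      have h0 : (monomial n (r + s) : Polynomial (Polynomial K))
          = monomial n r + monomial n s := by simp
      have h2 : swapXY ((monomial n r : Polynomial (Polynomial K)) + monomial n s)
          = swapXY (monomial n r) + swapXY (monomial n s) := by
        simp [swapXY, subst2, eval₂_add]
      simp only [h0, h2, Polynomial.coeff_add] at *
      simp [hr, hs]
    | monomial k a =>
      rw [swapXY_monomial]
      simp only [Polynomial.coeff_monomial]
      by_cases h1 : i = j <;> by_cases h2 : k = i <;> by_cases h3 : n = j <;>
        simp_all [Polynomial.coeff_monomial]

lemma degX_le_iff {f : Polynomial (Polynomial K)} {n : ℕ} :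
    degX f ≤ n ↔ ∀ j, (f.coeff j).natDegree ≤ n := by
  constructor
  · intro h j
    by_cases hj : j ∈ f.support
    · exact le_trans (Finset.le_sup (f := fun j => (f.coeff j).natDegree) hj) h
    · simp [Polynomial.notMem_support_iff.mp hj]
  · intro h
    exact Finset.sup_le fun j _ => h j

lemma natDegree_swapXY (f : Polynomial (Polynomial K)) :
    (swapXY f).natDegree = degX f := by
  apply le_antisymm
  · rw [Polynomial.natDegree_le_iff_coeff_eq_zero]
    intro N hN
    ext j
    rw [coeff_swapXY, Polynomial.coeff_zero]
    by_cases hj : j ∈ f.support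
    · exact Polynomial.coeff_eq_zero_of_natDegree_lt (lt_of_le_of_lt (Finset.le_sup (f := fun j => (f.coeff j).natDegree) hj) hN)
    · simp [Polynomial.notMem_support_iff.mp hj]
  · apply Finset.sup_le
    intro j hj
    have h0 : f.coeff j ≠ 0 := Polynomial.mem_support_iff.mp hj
    apply Polynomial.le_natDegree_of_ne_zero
    intro hcon
    have : ((swapXY f).coeff ((f.coeff j).natDegree)).coeff j = 0 := by
      rw [hcon]; simp
    rw [coeff_swapXY] at this
    exact Polynomial.leadingCoeff_ne_zero.mpr h0 this

lemma leadX_eq (f : Polynomial (Polynomial K)) :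
    leadX f = (swapXY f).leadingCoeff := by
  rw [Polynomial.leadingCoeff, natDegree_swapXY]
  ext j
  rw [coeff_swapXY, leadX, Polynomial.finset_sum_coeff]
  simp only [Polynomial.coeff_C_mul, Polynomial.coeff_X_pow, mul_ite, mul_one, mul_zero]
  rw [Finset.sum_ite_eq f.support j fun j' => (f.coeff j').coeff (degX f)]
  by_cases hj : j ∈ f.support
  · simp [hj]
  · simp [hj, Polynomial.notMem_support_iff.mp hj]

lemma degX_eq_zero_iff {f : Polynomial (Polynomial K)} :
    (swapXY f).natDegree = 0 ↔ degX f = 0 := by rw [natDegree_swapXY]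

/-- evaluation of the inner variable at `x0`, as an algebra hom `K[x][y] →ₐ[K] K[y]`. -/
def epsAlg (x0 : K) : Polynomial (Polynomial K) →ₐ[K] Polynomial K :=
  Polynomial.mapAlgHom (Polynomial.aeval x0)

lemma aeval_toRingHom_eq (x0 : K) :
    ((Polynomial.aeval x0 : Polynomial K →ₐ[K] K) : Polynomial K →+* K)
      = Polynomial.evalRingHom x0 := by ext <;> simp

lemma epsAlg_apply (x0 : K) (h : Polynomial (Polynomial K)) :
    epsAlg x0 h = h.map (Polynomial.evalRingHom x0) := by
  rw [epsAlg, Polynomial.coe_mapAlgHom, aeval_toRingHom_eq]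

lemma epsAlg_surjective (x0 : K) : Function.Surjective (epsAlg x0) := by
  intro p
  refine ⟨p.map (Polynomial.C : K →+* Polynomial K), ?_⟩
  rw [epsAlg_apply, Polynomial.map_map]
  have hid : (Polynomial.evalRingHom x0).comp (Polynomial.C : K →+* Polynomial K) = RingHom.id K := by
    ext a; simp
  rw [hid, Polynomial.map_id]

lemma epsAlg_C (x0 : K) (r : Polynomial K) :
    epsAlg x0 (Polynomial.C r) = Polynomial.C (r.eval x0) := by
  rw [epsAlg_apply, Polynomial.map_C]; rfl

lemma ker_eps_ideal (x0 : K) {h : Polynomial (Polynomial K)}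
    (hh : epsAlg x0 h = 0) :
    Polynomial.C (Polynomial.X - Polynomial.C x0) ∣ h := by
  rw [Polynomial.C_dvd_iff_dvd_coeff]
  intro i
  rw [Polynomial.dvd_iff_isRoot]
  have : (h.map (Polynomial.evalRingHom x0)).coeff i = 0 := by
    rw [← epsAlg_apply, hh]; simp
  rw [Polynomial.coeff_map] at this
  exact this

/-- The kernel of `h ↦ h(x0, y) mod (F(x0,y) - c)` is `(x - x0, F - c)`. -/
lemma ker_eps_mk (x0 c : K) (F : Polynomial (Polynomial K)) :
    RingHom.ker ((Ideal.Quotient.mkₐ K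
        (Ideal.span {F.map (Polynomial.evalRingHom x0) - Polynomial.C c})).comp
        (epsAlg x0) : Polynomial (Polynomial K) →ₐ[K] _)
      = Ideal.span {Polynomial.C (Polynomial.X - Polynomial.C x0),
          F - Polynomial.C (Polynomial.C c)} := by
  set P : Polynomial K := F.map (Polynomial.evalRingHom x0) - Polynomial.C c with hP
  ext h
  rw [RingHom.mem_ker]
  have happ : ((Ideal.Quotient.mkₐ K (Ideal.span {P})).comp (epsAlg x0)) h
      = Ideal.Quotient.mk (Ideal.span {P}) (epsAlg x0 h) := by
    simp [Ideal.Quotient.mkₐ_eq_mk]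
  rw [happ, Ideal.Quotient.eq_zero_iff_mem]
  constructor
  · intro hmem
    obtain ⟨w, hw⟩ := Ideal.mem_span_singleton'.mp hmem
    set w' : Polynomial (Polynomial K) := w.map (Polynomial.C : K →+* Polynomial K) with hw'
    have hew : epsAlg x0 w' = w := by
      rw [epsAlg_apply, hw', Polynomial.map_map]
      have hid : (Polynomial.evalRingHom x0).comp (Polynomial.C : K →+* Polynomial K) = RingHom.id K := by
        ext a; simp
      rw [hid, Polynomial.map_id]
    have h0 : epsAlg x0 (h - w' * (F - Polynomial.C (Polynomial.C c))) = 0 := by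
      rw [map_sub, map_mul, hew, map_sub]
      have : epsAlg x0 F = F.map (Polynomial.evalRingHom x0) := epsAlg_apply x0 F
      rw [this, epsAlg_C]
      simp only [Polynomial.eval_C]
      rw [← hP, ← hw, sub_self]
    have hdvd := ker_eps_ideal x0 h0
    obtain ⟨z, hz⟩ := hdvd
    rw [Ideal.mem_span_pair]
    refine ⟨z, w', ?_⟩
    have : h = (h - w' * (F - Polynomial.C (Polynomial.C c)))
        + w' * (F - Polynomial.C (Polynomial.C c)) := by ring
    rw [this, hz]; ring
  · intro hmem
    rw [Ideal.mem_span_pair] at hmem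
    obtain ⟨a, b, hab⟩ := hmem
    rw [← hab]
    rw [map_add, map_mul, map_mul]
    have e1 : epsAlg x0 (Polynomial.C (Polynomial.X - Polynomial.C x0)) = 0 := by
      rw [epsAlg_C]; simp
    have e2 : epsAlg x0 (F - Polynomial.C (Polynomial.C c)) = P := by
      rw [map_sub, epsAlg_apply, epsAlg_C]
      simp [hP]
    rw [e1, e2, mul_zero, zero_add]
    exact Ideal.mul_mem_left _ _ (Ideal.subset_span rfl)

lemma finite_quot {P : Polynomial K} (hP : P ≠ 0) :
    Module.Finite K (Polynomial K ⧸ Ideal.span {P}) :=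
  (AdjoinRoot.powerBasis hP).finite

lemma finrank_quot {P : Polynomial K} (hP : P ≠ 0) :
    Module.finrank K (Polynomial K ⧸ Ideal.span {P}) = P.natDegree := by
  have h := (AdjoinRoot.powerBasis hP).finrank
  rwa [AdjoinRoot.powerBasis_dim hP] at h

lemma not_finite_quot_zero :
    ¬ Module.Finite K (Polynomial K ⧸ Ideal.span {(0 : Polynomial K)}) := by
  intro hfin
  have hbot : RingHom.ker (AlgHom.id K (Polynomial K)) = Ideal.span {(0 : Polynomial K)} := by
    rw [Ideal.span_singleton_eq_bot.mpr rfl]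
    exact (RingHom.injective_iff_ker_eq_bot _).mp fun a b hab => hab
  have e : (Polynomial K ⧸ Ideal.span {(0 : Polynomial K)}) ≃ₐ[K] Polynomial K :=
    (Ideal.quotientEquivAlgOfEq K hbot.symm).trans
      (Ideal.quotientKerAlgEquivOfSurjective (f := AlgHom.id K (Polynomial K))
        Function.surjective_id)
  exact Polynomial.not_finite (Module.Finite.equiv e.toLinearEquiv)


namespace Core
variable (f g u v : Polynomial (Polynomial K))
variable (h1 : subst2 u v f = Polynomial.C Polynomial.X)
variable (h2 : subst2 u v g = Polynomial.X)
variable (h3 : subst2 f g u = Polynomial.C Polynomial.X)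
variable (h4 : subst2 f g v = Polynomial.X)

include h1 h2 h3 h4

/-- kernel of `h ↦ (Ψ h)(c, y) mod (u(c,y) - x0)` is also `(x - x0, f - c)`. -/
lemma ker_psi_eps_mk (x0 c : K) :
    RingHom.ker (((Ideal.Quotient.mkₐ K
        (Ideal.span {u.map (Polynomial.evalRingHom c) - Polynomial.C x0})).comp
        (epsAlg c)).comp (substAlg u v) : Polynomial (Polynomial K) →ₐ[K] _)
      = Ideal.span {Polynomial.C (Polynomial.X - Polynomial.C x0),
          f - Polynomial.C (Polynomial.C c)} := by
  have hPsiPhi : ∀ h : Polynomial (Polynomial K), subst2 f g (subst2 u v h) = h := by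
    intro h
    rw [subst2_comp, h3, h4, subst2_id]
  have hPhiPsi : ∀ h : Polynomial (Polynomial K), subst2 u v (subst2 f g h) = h := by
    intro h
    rw [subst2_comp, h1, h2, subst2_id]
  ext h
  have hmem : h ∈ RingHom.ker (((Ideal.Quotient.mkₐ K
        (Ideal.span {u.map (Polynomial.evalRingHom c) - Polynomial.C x0})).comp
        (epsAlg c)).comp (substAlg u v) : Polynomial (Polynomial K) →ₐ[K] _)
      ↔ substAlg u v h ∈ Ideal.span {Polynomial.C (Polynomial.X - Polynomial.C c),
          u - Polynomial.C (Polynomial.C x0)} := by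
    rw [RingHom.mem_ker, ← ker_eps_mk c x0 u, RingHom.mem_ker]
    rfl
  rw [hmem]
  -- Ψ maps generators of I to generators of J and back via Φ
  have key1 : subst2 u v (Polynomial.C (Polynomial.X - Polynomial.C x0))
      = u - Polynomial.C (Polynomial.C x0) := by
    rw [subst2_C, map_sub, aeval_X, aeval_C]; rfl
  have key2 : subst2 u v (f - Polynomial.C (Polynomial.C c))
      = Polynomial.C (Polynomial.X - Polynomial.C c) := by
    rw [← substAlg_apply, map_sub, substAlg_apply, substAlg_apply, h1, subst2_CC, ← map_sub]
  have key3 : subst2 f g (Polynomial.C (Polynomial.X - Polynomial.C c))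
      = f - Polynomial.C (Polynomial.C c) := by
    rw [subst2_C, map_sub, aeval_X, aeval_C]; rfl
  have key4 : subst2 f g (u - Polynomial.C (Polynomial.C x0))
      = Polynomial.C (Polynomial.X - Polynomial.C x0) := by
    rw [← substAlg_apply, map_sub, substAlg_apply, substAlg_apply, h3, subst2_CC, ← map_sub]
  have key1' : substAlg u v (Polynomial.C (Polynomial.X - Polynomial.C x0))
      = u - Polynomial.C (Polynomial.C x0) := by rw [substAlg_apply]; exact key1
  have key2' : substAlg u v (f - Polynomial.C (Polynomial.C c))
      = Polynomial.C (Polynomial.X - Polynomial.C c) := by rw [substAlg_apply]; exact key2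
  have key3' : substAlg f g (Polynomial.C (Polynomial.X - Polynomial.C c))
      = f - Polynomial.C (Polynomial.C c) := by rw [substAlg_apply]; exact key3
  have key4' : substAlg f g (u - Polynomial.C (Polynomial.C x0))
      = Polynomial.C (Polynomial.X - Polynomial.C x0) := by rw [substAlg_apply]; exact key4
  constructor
  · intro hJ
    rw [Ideal.mem_span_pair] at hJ
    obtain ⟨a, b, hab⟩ := hJ
    rw [Ideal.mem_span_pair]
    refine ⟨substAlg f g b, substAlg f g a, ?_⟩
    have hh : h = substAlg f g (substAlg u v h) := by
      rw [substAlg_apply, substAlg_apply]; exact (hPsiPhi h).symm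
    rw [hh, ← hab, map_add, map_mul, map_mul, key3', key4']
    ring
  · intro hI
    rw [Ideal.mem_span_pair] at hI
    obtain ⟨a, b, hab⟩ := hI
    rw [Ideal.mem_span_pair]
    refine ⟨substAlg u v b, substAlg u v a, ?_⟩
    rw [← hab, map_add, map_mul, map_mul, key1', key2']
    ring

lemma substAlg_surjective : Function.Surjective (substAlg u v) := by
  intro h
  refine ⟨subst2 f g h, ?_⟩
  rw [substAlg_apply, subst2_comp, h1, h2, subst2_id]

lemma core_equiv (x0 c : K) :
    Nonempty ((Polynomial K ⧸ Ideal.span {f.map (Polynomial.evalRingHom x0) - Polynomial.C c})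
      ≃ₐ[K] (Polynomial K ⧸ Ideal.span {u.map (Polynomial.evalRingHom c) - Polynomial.C x0})) := by
  set κ1 := (Ideal.Quotient.mkₐ K
      (Ideal.span {f.map (Polynomial.evalRingHom x0) - Polynomial.C c})).comp (epsAlg x0) with hκ1
  set κ2 := ((Ideal.Quotient.mkₐ K
      (Ideal.span {u.map (Polynomial.evalRingHom c) - Polynomial.C x0})).comp
        (epsAlg c)).comp (substAlg u v) with hκ2
  have hs1 : Function.Surjective κ1 :=
    (Ideal.Quotient.mkₐ_surjective K _).comp (epsAlg_surjective x0)
  have hs2 : Function.Surjective κ2 :=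
    ((Ideal.Quotient.mkₐ_surjective K _).comp (epsAlg_surjective c)).comp
      (substAlg_surjective f g u v h1 h2 h3 h4)
  have hker : RingHom.ker κ1 = RingHom.ker κ2 := by
    rw [hκ1, hκ2, ker_eps_mk x0 c f, ker_psi_eps_mk f g u v h1 h2 h3 h4 x0 c]
  exact ⟨(Ideal.quotientKerAlgEquivOfSurjective hs1).symm.trans
    ((Ideal.quotientEquivAlgOfEq K hker).trans (Ideal.quotientKerAlgEquivOfSurjective hs2))⟩

lemma core_count (x0 c : K) :
    ((f.map (Polynomial.evalRingHom x0) - Polynomial.C c) = 0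
      ↔ (u.map (Polynomial.evalRingHom c) - Polynomial.C x0) = 0) ∧
    ((f.map (Polynomial.evalRingHom x0) - Polynomial.C c) ≠ 0 →
      (f.map (Polynomial.evalRingHom x0) - Polynomial.C c).natDegree
        = (u.map (Polynomial.evalRingHom c) - Polynomial.C x0).natDegree) := by
  obtain ⟨e⟩ := core_equiv f g u v h1 h2 h3 h4 x0 c
  set P := f.map (Polynomial.evalRingHom x0) - Polynomial.C c with hPdef
  set Q := u.map (Polynomial.evalRingHom c) - Polynomial.C x0 with hQdef
  have hiff : P = 0 ↔ Q = 0 := by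
    constructor
    · intro hP0
      by_contra hQ0
      have hfinQ : Module.Finite K (Polynomial K ⧸ Ideal.span {Q}) := finite_quot hQ0
      have hfinP : Module.Finite K (Polynomial K ⧸ Ideal.span {P}) :=
        Module.Finite.equiv e.symm.toLinearEquiv
      rw [hP0] at hfinP
      exact not_finite_quot_zero hfinP
    · intro hQ0
      by_contra hP0
      have hfinP : Module.Finite K (Polynomial K ⧸ Ideal.span {P}) := finite_quot hP0
      have hfinQ : Module.Finite K (Polynomial K ⧸ Ideal.span {Q}) :=
        Module.Finite.equiv e.toLinearEquiv
      rw [hQ0] at hfinQ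
      exact not_finite_quot_zero hfinQ
  refine ⟨hiff, fun hP0 => ?_⟩
  have hQ0 : Q ≠ 0 := fun h0 => hP0 (hiff.mpr h0)
  have := LinearEquiv.finrank_eq e.toLinearEquiv
  rwa [finrank_quot hP0, finrank_quot hQ0] at this


lemma nd_zero [CharZero K] (hm : f.natDegree = 0) : u.natDegree = 0 := by
  classical
  by_contra hn
  have hu0 : u ≠ 0 := fun h => hn (by simp [h])
  have hlcu : u.leadingCoeff ≠ 0 := Polynomial.leadingCoeff_ne_zero.mpr hu0
  obtain ⟨c, hc⟩ := Infinite.exists_notMem_finset u.leadingCoeff.roots.toFinset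
  have hevc : u.leadingCoeff.eval c ≠ 0 := fun h =>
    hc (Multiset.mem_toFinset.mpr ((Polynomial.mem_roots hlcu).mpr h))
  have count := core_count f g u v h1 h2 h3 h4 0 c
  have hndu : (u.map (Polynomial.evalRingHom c)).natDegree = u.natDegree :=
    Polynomial.natDegree_map_of_leadingCoeff_ne_zero _
      (by rwa [Polynomial.coe_evalRingHom])
  have hndQ : (u.map (Polynomial.evalRingHom c) - Polynomial.C (0 : K)).natDegree
      = u.natDegree := by rw [Polynomial.natDegree_sub_C, hndu]
  have hQ0 : (u.map (Polynomial.evalRingHom c) - Polynomial.C (0 : K)) ≠ 0 := by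
    intro h0
    rw [h0, Polynomial.natDegree_zero] at hndQ
    exact hn hndQ.symm
  have hP0 : (f.map (Polynomial.evalRingHom 0) - Polynomial.C c) ≠ 0 :=
    fun h0 => hQ0 (count.1.mp h0)
  have hndeq := count.2 hP0
  rw [hndQ] at hndeq
  obtain ⟨p, hp⟩ := Polynomial.natDegree_eq_zero.mp hm
  rw [← hp, Polynomial.map_C] at hndeq
  have : (Polynomial.C ((Polynomial.evalRingHom (0:K)) p) - Polynomial.C c).natDegree = 0 := by
    rw [← Polynomial.C_sub, Polynomial.natDegree_C]
  rw [this] at hndeq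
  exact hn hndeq.symm

lemma main_pair [IsAlgClosed K] [CharZero K] :
    f.natDegree = u.natDegree ∧
    (f.natDegree = 0 → ∃ a b : K, a ≠ 0 ∧
      f = Polynomial.C (Polynomial.C a * Polynomial.X + Polynomial.C b)) ∧
    (f.natDegree ≠ 0 → ∃ a : K, a ≠ 0 ∧ f.leadingCoeff = Polynomial.C a) := by
  classical
  by_cases hm : f.natDegree = 0
  · have hn := nd_zero f g u v h1 h2 h3 h4 hm
    obtain ⟨p, hp⟩ := Polynomial.natDegree_eq_zero.mp hm
    obtain ⟨q, hq⟩ := Polynomial.natDegree_eq_zero.mp hn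
    have hqp : ∀ x0 : K, q.eval (p.eval x0) = x0 := by
      intro x0
      have count := core_count f g u v h1 h2 h3 h4 x0 (p.eval x0)
      have hP0 : f.map (Polynomial.evalRingHom x0) - Polynomial.C (p.eval x0) = 0 := by
        rw [← hp, Polynomial.map_C, Polynomial.coe_evalRingHom, sub_self]
      have hQ0 := count.1.mp hP0
      rw [← hq, Polynomial.map_C, Polynomial.coe_evalRingHom, sub_eq_zero] at hQ0
      exact Polynomial.C_injective hQ0
    have hqpX : q.comp p = Polynomial.X := by
      apply Polynomial.funext
      intro r
      rw [Polynomial.eval_comp, hqp r, Polynomial.eval_X]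
    have hnd1 : q.natDegree * p.natDegree = 1 := by
      rw [← Polynomial.natDegree_comp, hqpX, Polynomial.natDegree_X]
    have hp1 : p.natDegree = 1 := Nat.eq_one_of_mul_eq_one_left hnd1
    have hpne : p ≠ 0 := fun h0 => by simp [h0] at hp1
    have ha : p.coeff 1 ≠ 0 := by
      have := Polynomial.leadingCoeff_ne_zero.mpr hpne
      rwa [Polynomial.leadingCoeff, hp1] at this
    refine ⟨hm.trans hn.symm, fun _ => ⟨p.coeff 1, p.coeff 0, ha, ?_⟩, fun h => absurd hm h⟩
    rw [← hp, ← Polynomial.eq_X_add_C_of_natDegree_le_one (le_of_eq hp1)]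
  · have hn : u.natDegree ≠ 0 := fun h0 => hm (nd_zero u v f g h3 h4 h1 h2 h0)
    have hf0 : f ≠ 0 := fun h => hm (by simp [h])
    have hu0 : u ≠ 0 := fun h => hn (by simp [h])
    have hlcf : f.leadingCoeff ≠ 0 := Polynomial.leadingCoeff_ne_zero.mpr hf0
    have hlcu : u.leadingCoeff ≠ 0 := Polynomial.leadingCoeff_ne_zero.mpr hu0
    have hQgen : ∀ c x0 : K, u.leadingCoeff.eval c ≠ 0 →
        (u.map (Polynomial.evalRingHom c) - Polynomial.C x0).natDegree = u.natDegree ∧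
        (u.map (Polynomial.evalRingHom c) - Polynomial.C x0) ≠ 0 := by
      intro c x0 hevc
      have hndu : (u.map (Polynomial.evalRingHom c)).natDegree = u.natDegree :=
        Polynomial.natDegree_map_of_leadingCoeff_ne_zero _
          (by rwa [Polynomial.coe_evalRingHom])
      have hndQ : (u.map (Polynomial.evalRingHom c) - Polynomial.C x0).natDegree
          = u.natDegree := by rw [Polynomial.natDegree_sub_C, hndu]
      refine ⟨hndQ, fun h0 => ?_⟩
      rw [h0, Polynomial.natDegree_zero] at hndQ
      exact hn hndQ.symm
    have hmn : f.natDegree = u.natDegree := by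
      obtain ⟨x1, hx1⟩ := Infinite.exists_notMem_finset f.leadingCoeff.roots.toFinset
      obtain ⟨c1, hc1⟩ := Infinite.exists_notMem_finset u.leadingCoeff.roots.toFinset
      have hevx1 : f.leadingCoeff.eval x1 ≠ 0 := fun h =>
        hx1 (Multiset.mem_toFinset.mpr ((Polynomial.mem_roots hlcf).mpr h))
      have hevc1 : u.leadingCoeff.eval c1 ≠ 0 := fun h =>
        hc1 (Multiset.mem_toFinset.mpr ((Polynomial.mem_roots hlcu).mpr h))
      obtain ⟨hndQ, hQ0⟩ := hQgen c1 x1 hevc1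
      have count := core_count f g u v h1 h2 h3 h4 x1 c1
      have hndP : (f.map (Polynomial.evalRingHom x1) - Polynomial.C c1).natDegree
          = f.natDegree := by
        rw [Polynomial.natDegree_sub_C]
        exact Polynomial.natDegree_map_of_leadingCoeff_ne_zero _
          (by rwa [Polynomial.coe_evalRingHom])
      have hP0 : (f.map (Polynomial.evalRingHom x1) - Polynomial.C c1) ≠ 0 := by
        intro h0
        rw [h0, Polynomial.natDegree_zero] at hndP
        exact hm hndP.symm
      have := count.2 hP0
      rw [hndP, hndQ] at this
      exact this
    have hnoroot : ∀ x0 : K, f.leadingCoeff.eval x0 ≠ 0 := by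
      intro x0 hx0
      obtain ⟨c, hc⟩ := Infinite.exists_notMem_finset
        (u.leadingCoeff.roots.toFinset ∪ {(f.map (Polynomial.evalRingHom x0)).coeff 0})
      have hevc : u.leadingCoeff.eval c ≠ 0 := fun h =>
        hc (Finset.mem_union_left _ (Multiset.mem_toFinset.mpr
          ((Polynomial.mem_roots hlcu).mpr h)))
      obtain ⟨hndQ, hQ0⟩ := hQgen c x0 hevc
      have count := core_count f g u v h1 h2 h3 h4 x0 c
      have hP0 : (f.map (Polynomial.evalRingHom x0) - Polynomial.C c) ≠ 0 := by
        intro h0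
        rw [sub_eq_zero] at h0
        have hc0 : (f.map (Polynomial.evalRingHom x0)).coeff 0 = c := by
          rw [h0, Polynomial.coeff_C, if_pos rfl]
        exact hc (Finset.mem_union_right _ (by rw [← hc0]; exact Finset.mem_singleton_self _))
      have hndeq := count.2 hP0
      rw [hndQ, ← hmn] at hndeq
      have hcoeff : (f.map (Polynomial.evalRingHom x0) - Polynomial.C c).coeff f.natDegree
          = 0 := by
        rw [Polynomial.coeff_sub, Polynomial.coeff_map, Polynomial.coeff_C, if_neg hm]
        rw [Polynomial.coe_evalRingHom]
        show f.leadingCoeff.eval x0 - 0 = 0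
        rw [hx0, sub_zero]
      have hlcP := Polynomial.leadingCoeff_ne_zero.mpr hP0
      rw [Polynomial.leadingCoeff, hndeq] at hlcP
      exact hlcP hcoeff
    have hdeg0 : f.leadingCoeff.natDegree = 0 := by
      by_contra hd
      have hdne : f.leadingCoeff.degree ≠ 0 := fun h0 =>
        hd (Polynomial.natDegree_eq_zero_iff_degree_le_zero.mpr (le_of_eq h0))
      obtain ⟨x0, hx0⟩ := IsAlgClosed.exists_root _ hdne
      exact hnoroot x0 hx0
    obtain ⟨a, ha⟩ := Polynomial.natDegree_eq_zero.mp hdeg0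
    have ha0 : a ≠ 0 := fun h0 => hlcf (by rw [← ha, h0, Polynomial.C_0])
    exact ⟨hmn, fun h => absurd h hm, fun _ => ⟨a, ha0, ha.symm⟩⟩

end Core


lemma swapXY_C_linear (a b : K) :
    swapXY (Polynomial.C (Polynomial.C a * Polynomial.X + Polynomial.C b)
      : Polynomial (Polynomial K))
      = Polynomial.C (Polynomial.C a) * Polynomial.X + Polynomial.C (Polynomial.C b) := by
  rw [swapXY, subst2_C, map_add, map_mul, aeval_X, aeval_C, aeval_C]
  rfl

/-- Degree relations between the components of a plane polynomial
automorphism and of its inverse, and the shape of the corresponding leading coefficients. -/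
theorem automorphism_degree_relations [IsAlgClosed K] [CharZero K]
    (σx σy τx τy : Polynomial (Polynomial K))
    (h1 : subst2 τx τy σx = Polynomial.C Polynomial.X)
    (h2 : subst2 τx τy σy = Polynomial.X)
    (h3 : subst2 σx σy τx = Polynomial.C Polynomial.X)
    (h4 : subst2 σx σy τy = Polynomial.X) :
    σx.natDegree = τx.natDegree ∧
    degX σy = degX τy ∧
    degX σx = τy.natDegree ∧
    σy.natDegree = degX τx ∧
    (σx.natDegree = 0 → ∃ a b : K, a ≠ 0 ∧
      σx = Polynomial.C (Polynomial.C a * Polynomial.X + Polynomial.C b)) ∧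
    (σx.natDegree ≠ 0 → ∃ a : K, a ≠ 0 ∧ σx.leadingCoeff = Polynomial.C a) ∧
    (degX σy = 0 → ∃ a b : K, a ≠ 0 ∧
      σy = Polynomial.C (Polynomial.C a) * Polynomial.X + Polynomial.C (Polynomial.C b)) ∧
    (degX σy ≠ 0 → ∃ a : K, a ≠ 0 ∧ leadX σy = Polynomial.C a) ∧
    (degX σx = 0 → ∃ a b : K, a ≠ 0 ∧
      σx = Polynomial.C (Polynomial.C a) * Polynomial.X + Polynomial.C (Polynomial.C b)) ∧
    (degX σx ≠ 0 → ∃ a : K, a ≠ 0 ∧ leadX σx = Polynomial.C a) ∧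
    (σy.natDegree = 0 → ∃ a b : K, a ≠ 0 ∧
      σy = Polynomial.C (Polynomial.C a * Polynomial.X + Polynomial.C b)) ∧
    (σy.natDegree ≠ 0 → ∃ a : K, a ≠ 0 ∧ σy.leadingCoeff = Polynomial.C a) := by
  have s1 := Core.main_pair σx σy τx τy h1 h2 h3 h4
  have i21 : subst2 (swapXY τy) (swapXY τx) (swapXY σy) = Polynomial.C Polynomial.X := by
    rw [subst2_swap_left, ← swap_subst2, h2, swapXY_X]
  have i22 : subst2 (swapXY τy) (swapXY τx) (swapXY σx) = Polynomial.X := by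
    rw [subst2_swap_left, ← swap_subst2, h1, swapXY_CX]
  have i23 : subst2 (swapXY σy) (swapXY σx) (swapXY τy) = Polynomial.C Polynomial.X := by
    rw [subst2_swap_left, ← swap_subst2, h4, swapXY_X]
  have i24 : subst2 (swapXY σy) (swapXY σx) (swapXY τx) = Polynomial.X := by
    rw [subst2_swap_left, ← swap_subst2, h3, swapXY_CX]
  have s2 := Core.main_pair _ _ _ _ i21 i22 i23 i24
  have i31 : subst2 τy τx (swapXY σx) = Polynomial.C Polynomial.X := by
    rw [subst2_swap_left, h1]
  have i32 : subst2 τy τx (swapXY σy) = Polynomial.X := by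
    rw [subst2_swap_left, h2]
  have i33 : subst2 (swapXY σx) (swapXY σy) τy = Polynomial.C Polynomial.X := by
    rw [← swap_subst2, h4, swapXY_X]
  have i34 : subst2 (swapXY σx) (swapXY σy) τx = Polynomial.X := by
    rw [← swap_subst2, h3, swapXY_CX]
  have s3 := Core.main_pair _ _ _ _ i31 i32 i33 i34
  have i41 : subst2 (swapXY τx) (swapXY τy) σy = Polynomial.C Polynomial.X := by
    rw [← swap_subst2, h2, swapXY_X]
  have i42 : subst2 (swapXY τx) (swapXY τy) σx = Polynomial.X := by
    rw [← swap_subst2, h1, swapXY_CX]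
  have i43 : subst2 σy σx (swapXY τx) = Polynomial.C Polynomial.X := by
    rw [subst2_swap_left, h3]
  have i44 : subst2 σy σx (swapXY τy) = Polynomial.X := by
    rw [subst2_swap_left, h4]
  have s4 := Core.main_pair _ _ _ _ i41 i42 i43 i44
  refine ⟨s1.1, ?_, ?_, ?_, s1.2.1, s1.2.2, ?_, ?_, ?_, ?_, ?_, ?_⟩
  · -- degX σy = degX τy
    have := s2.1
    rwa [natDegree_swapXY, natDegree_swapXY] at this
  · -- degX σx = τy.natDegree
    have := s3.1
    rwa [natDegree_swapXY] at this
  · -- σy.natDegree = degX τx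
    have := s4.1
    rwa [natDegree_swapXY] at this
  · -- degX σy = 0 → σy linear in x
    intro h0
    obtain ⟨a, b, ha, hab⟩ := s2.2.1 (by rwa [natDegree_swapXY])
    refine ⟨a, b, ha, ?_⟩
    have := congrArg swapXY hab
    rwa [swapXY_swapXY, swapXY_C_linear] at this
  · -- degX σy ≠ 0 → leadX σy constant
    intro h0
    obtain ⟨a, ha, hab⟩ := s2.2.2 (by rwa [natDegree_swapXY])
    exact ⟨a, ha, by rwa [leadX_eq]⟩
  · -- degX σx = 0 → σx linear in y
    intro h0
    obtain ⟨a, b, ha, hab⟩ := s3.2.1 (by rwa [natDegree_swapXY])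
    refine ⟨a, b, ha, ?_⟩
    have := congrArg swapXY hab
    rwa [swapXY_swapXY, swapXY_C_linear] at this
  · -- degX σx ≠ 0 → leadX σx constant
    intro h0
    obtain ⟨a, ha, hab⟩ := s3.2.2 (by rwa [natDegree_swapXY])
    exact ⟨a, ha, by rwa [leadX_eq]⟩
  · exact s4.2.1
  · exact s4.2.2

end DiscPaper
end
end
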